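/- Let ξ be an N-dimensional standard Gaussian vector and X an N×p random matrix independent of ξ. For θ ∈ ℝ^p and σ > 0, let P_{θ,σ} denote the joint law of (X, Y) where Y = Xθ + σξ. Let τ ∈ (0,1), σ = √(1−τ²), λ = (1−τ⁴)^{-1}. Then for any θ, θ' ∈ ℝ^p, ∫ dP_{θ,σ} dP_{θ',σ} / dP_{0,1} = λ^{N/2} · E_X[ exp( λ ( ⟨Xθ, Xθ'⟩ − (τ²/2)(‖Xθ‖₂² + ‖Xθ'‖₂²) ) ) ]. -/

import Mathlib

open MeasureTheory in
lemma gauss_one_aux (a b c : ℝ) (ha : 0 < a) :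
    ∫ t : ℝ, Real.exp (-a * t ^ 2 + b * t + c)
      = Real.sqrt (Real.pi / a) * Real.exp (b ^ 2 / (4 * a) + c) := by
  have key : ∀ t : ℝ, -a * t ^ 2 + b * t + c
      = -a * (t - b / (2 * a)) ^ 2 + (b ^ 2 / (4 * a) + c) := by
    intro t; field_simp; ring
  simp_rw [key, Real.exp_add, integral_mul_const]
  congr 1
  rw [integral_sub_right_eq_self (μ := volume) (fun t : ℝ => Real.exp (-a * t ^ 2)) (b / (2*a))]
  exact integral_gaussian a

open MeasureTheory in
/-- Chi-square functional identity for Gaussian regression with random design: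
`∫ dP_{θ,σ} dP_{θ',σ}/dP_{0,1}
  = λ^{N/2} E_X exp(λ(⟨Xθ, Xθ'⟩ − (τ²/2)(‖Xθ‖² + ‖Xθ'‖²)))`,
where the design matrix `X` (an `N × p` random matrix) is encoded as an element of
`Fin N → Fin p → ℝ` and `Xθ i = ∑ k, X i k * θ k`. -/
theorem stmt_10 (N p : ℕ) (μX : Measure (Fin N → Fin p → ℝ))
    [IsProbabilityMeasure μX] (τ σ lam : ℝ) (hτ : τ ∈ Set.Ioo (0 : ℝ) 1)
    (hσ : σ = Real.sqrt (1 - τ ^ 2)) (hlam : lam = (1 - τ ^ 4)⁻¹)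
    (θ θ' : Fin p → ℝ)
    (g : (Fin N → ℝ) → (Fin N → ℝ) → ℝ)
    (hg : g = fun m y => (2 * Real.pi * σ ^ 2) ^ (-(N : ℝ) / 2) *
      Real.exp (-(∑ i, (y i - m i) ^ 2) / (2 * σ ^ 2)))
    (φ : (Fin N → ℝ) → ℝ)
    (hφ : φ = fun y => (2 * Real.pi) ^ (-(N : ℝ) / 2) *
      Real.exp (-(∑ i, y i ^ 2) / 2)) :
    ∫ X, (∫ y : Fin N → ℝ,
        g (fun i => ∑ k, X i k * θ k) y * g (fun i => ∑ k, X i k * θ' k) y / φ y) ∂μX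
      = lam ^ ((N : ℝ) / 2) *
        ∫ X, Real.exp (lam *
          ((∑ i, (∑ k, X i k * θ k) * (∑ k, X i k * θ' k))
            - τ ^ 2 / 2 * ((∑ i, (∑ k, X i k * θ k) ^ 2)
              + ∑ i, (∑ k, X i k * θ' k) ^ 2))) ∂μX := by
  obtain ⟨hτ0, hτ1⟩ := hτ
  have hτ2 : (0:ℝ) < 1 - τ ^ 2 := by nlinarith
  have hτ4 : (0:ℝ) < 1 - τ ^ 4 := by nlinarith
  have h1τ : (0:ℝ) < 1 + τ ^ 2 := by nlinarith
  have hσ2 : σ ^ 2 = 1 - τ ^ 2 := by rw [hσ, Real.sq_sqrt hτ2.le]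
  have hσpos : (0:ℝ) < σ ^ 2 := hσ2 ▸ hτ2
  have hπ := Real.pi_pos
  have hlampos : 0 < lam := by rw [hlam]; positivity
  set a : ℝ := (1 + τ ^ 2) / (2 * σ ^ 2) with ha_def
  have ha : 0 < a := by positivity
  set A : ℝ := (2 * Real.pi * σ ^ 2) ^ (-(N : ℝ) / 2) with hA_def
  set B : ℝ := (2 * Real.pi) ^ (-(N : ℝ) / 2) with hB_def
  have hApos : 0 < A := Real.rpow_pos_of_pos (by positivity) _
  have hBpos : 0 < B := Real.rpow_pos_of_pos (by positivity) _
  have inner : ∀ m m' : Fin N → ℝ,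
      (∫ y : Fin N → ℝ, g m y * g m' y / φ y)
        = lam ^ ((N:ℝ)/2) * Real.exp (lam * ((∑ i, m i * m' i)
            - τ ^ 2 / 2 * ((∑ i, m i ^ 2) + ∑ i, m' i ^ 2))) := by
    intro m m'
    set b : Fin N → ℝ := fun i => (m i + m' i) / σ ^ 2 with hb_def
    set c : Fin N → ℝ := fun i => -(m i ^ 2 + m' i ^ 2) / (2 * σ ^ 2) with hc_def
    have point : ∀ y : Fin N → ℝ, g m y * g m' y / φ y
        = (A * A / B) * ∏ i, Real.exp (-a * (y i) ^ 2 + b i * y i + c i) := by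
      intro y
      rw [hg, hφ]
      simp only [← hA_def, ← hB_def]
      rw [← Real.exp_sum]
      have hsum : ∑ i, (-a * (y i) ^ 2 + b i * y i + c i)
          = (-(∑ i, (y i - m i) ^ 2) / (2 * σ ^ 2))
            + (-(∑ i, (y i - m' i) ^ 2) / (2 * σ ^ 2))
            - (-(∑ i, (y i) ^ 2) / 2) := by
        rw [neg_div, neg_div, neg_div, Finset.sum_div, Finset.sum_div, Finset.sum_div,
          ← Finset.sum_neg_distrib, ← Finset.sum_neg_distrib, ← Finset.sum_neg_distrib,
          ← Finset.sum_add_distrib, ← Finset.sum_sub_distrib]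
        refine Finset.sum_congr rfl fun i _ => ?_
        simp only [hb_def, hc_def, ha_def, hσ2]
        field_simp
        ring
      rw [hsum]
      have h3 : (0:ℝ) < Real.exp (-(∑ i, (y i) ^ 2) / 2) := Real.exp_pos _
      rw [div_eq_iff (by positivity)]
      rw [Real.exp_sub, Real.exp_add]
      field_simp
    simp_rw [point]
    rw [MeasureTheory.integral_const_mul,
      MeasureTheory.integral_fintype_prod_volume_eq_prod (ι := Fin N)
        (fun i (t : ℝ) => Real.exp (-a * t ^ 2 + b i * t + c i))]
    have : ∀ i : Fin N, (i ∈ Finset.univ) →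
        (∫ t : ℝ, Real.exp (-a * t ^ 2 + b i * t + c i))
          = Real.sqrt (Real.pi / a) * Real.exp (b i ^ 2 / (4 * a) + c i) :=
      fun i _ => gauss_one_aux a (b i) (c i) ha
    rw [Finset.prod_congr rfl this, Finset.prod_mul_distrib, Finset.prod_const,
      Finset.card_univ, Fintype.card_fin, ← Real.exp_sum]
    have hexp : ∑ i, (b i ^ 2 / (4 * a) + c i)
        = lam * ((∑ i, m i * m' i)
            - τ ^ 2 / 2 * ((∑ i, m i ^ 2) + ∑ i, m' i ^ 2)) := by
      have hpt : ∀ i : Fin N, (i ∈ Finset.univ) → b i ^ 2 / (4 * a) + c i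
          = lam * (m i * m' i) - lam * (τ ^ 2 / 2) * (m i ^ 2)
            - lam * (τ ^ 2 / 2) * (m' i ^ 2) := by
        intro i _
        simp only [hb_def, hc_def, ha_def, hσ2, hlam]
        field_simp
        ring
      rw [Finset.sum_congr rfl hpt, Finset.sum_sub_distrib, Finset.sum_sub_distrib,
        ← Finset.mul_sum, ← Finset.mul_sum, ← Finset.mul_sum]
      ring
    rw [hexp]
    have hconst : A * A / B * Real.sqrt (Real.pi / a) ^ N = lam ^ ((N:ℝ)/2) := by
      have hsq : Real.sqrt (Real.pi / a) ^ N = (Real.pi / a) ^ ((N:ℝ)/2) := by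
        rw [Real.sqrt_eq_rpow, ← Real.rpow_natCast ((Real.pi / a) ^ ((1:ℝ)/2)) N,
          ← Real.rpow_mul (by positivity), show (1/2 : ℝ) * (N:ℝ) = (N:ℝ)/2 by ring]
      have hA' : A = ((2*Real.pi*σ^2)⁻¹) ^ ((N:ℝ)/2) := by
        rw [hA_def, neg_div, Real.rpow_neg (by positivity), ← Real.inv_rpow (by positivity)]
      have hB' : B = ((2*Real.pi)⁻¹) ^ ((N:ℝ)/2) := by
        rw [hB_def, neg_div, Real.rpow_neg (by positivity), ← Real.inv_rpow (by positivity)]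
      have hbase : (2*Real.pi*σ^2)⁻¹ * (2*Real.pi*σ^2)⁻¹ / (2*Real.pi)⁻¹ * (Real.pi/a) = lam := by
        have h1 : (1 - τ^2) ≠ 0 := hτ2.ne'
        have h2 : (1 + τ^2) ≠ 0 := h1τ.ne'
        have h3 : (1 - τ^4) ≠ 0 := hτ4.ne'
        have h4 : Real.pi ≠ 0 := hπ.ne'
        rw [hlam, ha_def, hσ2]
        field_simp
        ring
      rw [hsq, hA', hB', ← Real.mul_rpow (by positivity) (by positivity),
        ← Real.div_rpow (by positivity) (by positivity),
        ← Real.mul_rpow (by positivity) (by positivity), hbase]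
    rw [← mul_assoc, hconst]
  calc ∫ X, (∫ y : Fin N → ℝ,
        g (fun i => ∑ k, X i k * θ k) y * g (fun i => ∑ k, X i k * θ' k) y / φ y) ∂μX
      = ∫ X, lam ^ ((N:ℝ)/2) * Real.exp (lam *
          ((∑ i, (∑ k, X i k * θ k) * (∑ k, X i k * θ' k))
            - τ ^ 2 / 2 * ((∑ i, (∑ k, X i k * θ k) ^ 2)
              + ∑ i, (∑ k, X i k * θ' k) ^ 2))) ∂μX := by
        refine integral_congr_ae (Filter.Eventually.of_forall fun X => ?_)
        exact inner _ _
    _ = _ := MeasureTheory.integral_const_mul _ _
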